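/- arXiv:2605.05871 — 2 statements merged into one kernel-verified Lean document; each statement's English description precedes it below -/
import Mathlib

section
/- Let L_r : R^p → R be C² with ||∇²L_r||_op ≤ M_r on the segments from w to w + δ_std and from w to w + δ_rosu, where δ_std = ρ g_f/||g_f||, δ_rosu = ρ q/||q||, q = (I - P_r) g_f ≠ 0, and g_f, g_r = ∇L_r(w) are nonzero. Then L_r(w + δ_std) - L_r(w + δ_rosu) ≥ ρ ||g_r|| cos θ - M_r ρ², where cos θ = g_f^T g_r / (||g_f|| ||g_r||). -/
open RealInnerProductSpace

private lemma opnorm2_le {p : ℕ} (L : EuclideanSpace ℝ (Fin p) → ℝ)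
    (z : EuclideanSpace ℝ (Fin p)) :
    ‖fderiv ℝ (fderiv ℝ L) z‖ ≤ ‖iteratedFDeriv ℝ 2 L z‖ := by
  refine ContinuousLinearMap.opNorm_le_bound _ (norm_nonneg _) fun u => ?_
  refine ContinuousLinearMap.opNorm_le_bound _ (by positivity) fun v => ?_
  have h := (iteratedFDeriv ℝ 2 L z).le_opNorm ![u, v]
  rw [iteratedFDeriv_two_apply] at h
  simpa [Fin.prod_univ_two, mul_assoc] using h

private lemma taylor_abs {p : ℕ} (L : EuclideanSpace ℝ (Fin p) → ℝ)
    (hC : ContDiff ℝ 2 L) (w δ : EuclideanSpace ℝ (Fin p)) (M : ℝ)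
    (hM : ∀ t : ℝ, t ∈ Set.Icc (0 : ℝ) 1 → ‖iteratedFDeriv ℝ 2 L (w + t • δ)‖ ≤ M) :
    |L (w + δ) - L w - fderiv ℝ L w δ| ≤ M / 2 * ‖δ‖ ^ 2 := by
  have hd : Differentiable ℝ L := hC.differentiable two_ne_zero
  have hd2 : Differentiable ℝ (fderiv ℝ L) :=
    (hC.fderiv_right (m := 1) (by norm_num)).differentiable one_ne_zero
  -- the segment
  have hseg : (fun t : ℝ => w + t • δ) '' Set.Icc 0 1 = segment ℝ w (w + δ) := by
    rw [segment_eq_image']; simp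
  -- Lipschitz bound for the derivative along the segment
  have hlip : ∀ t ∈ Set.Icc (0:ℝ) 1,
      ‖fderiv ℝ L (w + t • δ) - fderiv ℝ L w‖ ≤ M * t * ‖δ‖ := by
    intro t ht
    have hbound : ∀ x ∈ segment ℝ w (w + δ), ‖fderiv ℝ (fderiv ℝ L) x‖ ≤ M := by
      intro x hx
      rw [← hseg] at hx
      obtain ⟨s, hs, rfl⟩ := hx
      exact (opnorm2_le L _).trans (hM s hs)
    have hw : w ∈ segment ℝ w (w + δ) := left_mem_segment ℝ w (w + δ)
    have hwt : w + t • δ ∈ segment ℝ w (w + δ) := by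
      rw [← hseg]; exact ⟨t, ht, rfl⟩
    have := (convex_segment w (w + δ)).norm_image_sub_le_of_norm_fderiv_le
      (fun x _ => hd2 x) hbound hw hwt
    calc ‖fderiv ℝ L (w + t • δ) - fderiv ℝ L w‖ ≤ M * ‖(w + t • δ) - w‖ := this
      _ = M * t * ‖δ‖ := by
          rw [add_sub_cancel_left, norm_smul, Real.norm_eq_abs, abs_of_nonneg ht.1]; ring
  have hM0 : 0 ≤ M := (norm_nonneg _).trans (hM 0 ⟨le_rfl, zero_le_one⟩)
  set A : ℝ := fderiv ℝ L w δ with hA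
  set c : ℝ := M * ‖δ‖ ^ 2 with hc
  have hc0 : 0 ≤ c := by positivity
  -- derivative of t ↦ L (w + t • δ)
  have hline : ∀ t : ℝ, HasDerivAt (fun s : ℝ => w + s • δ) δ t := fun t => by
    simpa using ((hasDerivAt_id t).smul_const δ).const_add w
  set φ' : ℝ → ℝ := fun t => fderiv ℝ L (w + t • δ) δ with hφ'
  have hφ : ∀ t : ℝ, HasDerivAt (fun s : ℝ => L (w + s • δ)) (φ' t) t := fun t =>
    ((hd _).hasFDerivAt).comp_hasDerivAt t (hline t)
  have hφ'0 : φ' 0 = A := by simp [hφ', hA]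
  -- slope bound
  have hb : ∀ t ∈ Set.Icc (0:ℝ) 1, |φ' t - A| ≤ c * t := by
    intro t ht
    have : φ' t - A = (fderiv ℝ L (w + t • δ) - fderiv ℝ L w) δ := by
      simp [hφ', hA, ContinuousLinearMap.sub_apply]
    rw [this, ← Real.norm_eq_abs]
    calc ‖(fderiv ℝ L (w + t • δ) - fderiv ℝ L w) δ‖
        ≤ ‖fderiv ℝ L (w + t • δ) - fderiv ℝ L w‖ * ‖δ‖ :=
          ContinuousLinearMap.le_opNorm _ _
      _ ≤ (M * t * ‖δ‖) * ‖δ‖ :=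
          mul_le_mul_of_nonneg_right (hlip t ht) (norm_nonneg _)
      _ = c * t := by rw [hc]; ring
  -- upper bound via antitone function
  have upper : L (w + δ) - L w - A ≤ c / 2 := by
    set u : ℝ → ℝ := fun t => L (w + t • δ) - A * t - c / 2 * t ^ 2 with hu
    have hu' : ∀ t : ℝ, HasDerivAt u (φ' t - A - c * t) t := by
      intro t
      have h1 : HasDerivAt (fun s : ℝ => A * s) A t := by
        simpa using (hasDerivAt_id t).const_mul A
      have h2 : HasDerivAt (fun s : ℝ => c / 2 * s ^ 2) (c * t) t := by
        have := (hasDerivAt_pow 2 t).const_mul (c / 2)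
        exact this.congr_deriv (by ring)
      exact ((hφ t).sub h1).sub h2
    have hanti : AntitoneOn u (Set.Icc 0 1) := by
      refine antitoneOn_of_deriv_nonpos (convex_Icc 0 1)
        (fun t _ => ((hu' t).continuousAt).continuousWithinAt)
        (fun t _ => ((hu' t).differentiableAt).differentiableWithinAt) ?_
      intro t ht
      rw [interior_Icc] at ht
      rw [(hu' t).deriv]
      have := hb t ⟨ht.1.le, ht.2.le⟩
      have h3 : φ' t - A ≤ c * t := (abs_le.mp this).2
      linarith
    have := hanti (Set.left_mem_Icc.mpr zero_le_one) (Set.right_mem_Icc.mpr zero_le_one)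
      zero_le_one
    simp only [hu, zero_smul, add_zero, one_smul, mul_one, mul_zero, one_pow] at this
    nlinarith [this]
  -- lower bound via monotone function
  have lower : -(c / 2) ≤ L (w + δ) - L w - A := by
    set v : ℝ → ℝ := fun t => L (w + t • δ) - A * t + c / 2 * t ^ 2 with hv
    have hv' : ∀ t : ℝ, HasDerivAt v (φ' t - A + c * t) t := by
      intro t
      have h1 : HasDerivAt (fun s : ℝ => A * s) A t := by
        simpa using (hasDerivAt_id t).const_mul A
      have h2 : HasDerivAt (fun s : ℝ => c / 2 * s ^ 2) (c * t) t := by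
        have := (hasDerivAt_pow 2 t).const_mul (c / 2)
        exact this.congr_deriv (by ring)
      exact ((hφ t).sub h1).add h2
    have hmono : MonotoneOn v (Set.Icc 0 1) := by
      refine monotoneOn_of_deriv_nonneg (convex_Icc 0 1)
        (fun t _ => ((hv' t).continuousAt).continuousWithinAt)
        (fun t _ => ((hv' t).differentiableAt).differentiableWithinAt) ?_
      intro t ht
      rw [interior_Icc] at ht
      rw [(hv' t).deriv]
      have := hb t ⟨ht.1.le, ht.2.le⟩
      have h3 : -(c * t) ≤ φ' t - A := (abs_le.mp this).1
      linarith
    have := hmono (Set.left_mem_Icc.mpr zero_le_one) (Set.right_mem_Icc.mpr zero_le_one)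
      zero_le_one
    simp only [hv, zero_smul, add_zero, one_smul, mul_one, mul_zero, one_pow] at this
    nlinarith [this]
  rw [abs_le]
  constructor
  · rw [hc] at lower; linarith
  · rw [hc] at upper; linarith

/-- Retain-loss gap between the standard and ROSU perturbations is at least
`ρ‖g_r‖cos θ - M_r ρ²`. -/
theorem rosu_retain_gap {p : ℕ}
    (L_r : EuclideanSpace ℝ (Fin p) → ℝ) (M_r ρ : ℝ) (hρ : 0 < ρ)
    (w g_f g_r : EuclideanSpace ℝ (Fin p))
    (hgf : g_f ≠ 0) (hgr : g_r = gradient L_r w) (hgrne : g_r ≠ 0)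
    (q : EuclideanSpace ℝ (Fin p))
    (hq : q = g_f - (⟪g_f, g_r⟫ / ‖g_r‖ ^ 2) • g_r) (hqne : q ≠ 0)
    (δstd δrosu : EuclideanSpace ℝ (Fin p))
    (hstd : δstd = (ρ / ‖g_f‖) • g_f) (hrosu : δrosu = (ρ / ‖q‖) • q)
    (hC : ContDiff ℝ 2 L_r)
    (hM1 : ∀ t : ℝ, t ∈ Set.Icc (0 : ℝ) 1 →
      ‖iteratedFDeriv ℝ 2 L_r (w + t • δstd)‖ ≤ M_r)
    (hM2 : ∀ t : ℝ, t ∈ Set.Icc (0 : ℝ) 1 →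
      ‖iteratedFDeriv ℝ 2 L_r (w + t • δrosu)‖ ≤ M_r) :
    L_r (w + δstd) - L_r (w + δrosu) ≥
      ρ * ‖g_r‖ * (⟪g_f, g_r⟫ / (‖g_f‖ * ‖g_r‖)) - M_r * ρ ^ 2 := by
  have hgfn : (0:ℝ) < ‖g_f‖ := norm_pos_iff.mpr hgf
  have hgrn : (0:ℝ) < ‖g_r‖ := norm_pos_iff.mpr hgrne
  have hqn : (0:ℝ) < ‖q‖ := norm_pos_iff.mpr hqne
  have hnstd : ‖δstd‖ = ρ := by
    rw [hstd, norm_smul, Real.norm_eq_abs, abs_of_pos (by positivity)]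
    field_simp
  have hnrosu : ‖δrosu‖ = ρ := by
    rw [hrosu, norm_smul, Real.norm_eq_abs, abs_of_pos (by positivity)]
    field_simp
  have hgrad : ∀ y : EuclideanSpace ℝ (Fin p), fderiv ℝ L_r w y = ⟪g_r, y⟫ := by
    intro y
    rw [hgr, gradient]
    exact (InnerProductSpace.toDual_symm_apply).symm
  have hinner1 : fderiv ℝ L_r w δstd = ρ * ‖g_r‖ * (⟪g_f, g_r⟫ / (‖g_f‖ * ‖g_r‖)) := by
    rw [hgrad, hstd, real_inner_smul_right, real_inner_comm]
    field_simp
  have hinner2 : fderiv ℝ L_r w δrosu = 0 := by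
    rw [hgrad, hrosu, real_inner_smul_right, hq, inner_sub_right, real_inner_smul_right,
      real_inner_self_eq_norm_sq, real_inner_comm]
    field_simp
    ring
  have T1 := taylor_abs L_r hC w δstd M_r hM1
  have T2 := taylor_abs L_r hC w δrosu M_r hM2
  rw [hnstd, hinner1] at T1
  rw [hnrosu, hinner2] at T2
  have h1 := (abs_le.mp T1).1
  have h2 := (abs_le.mp T2).2
  linarith
end

section
/- Under the hypotheses of the retain-damage theorem, if cos θ(w) > M_r ρ / ||g_r(w)||, then L_r(w + δ_std(w)) > L_r(w + δ_rosu(w)). -/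
open RealInnerProductSpace

lemma rosu_taylor_bound {p : ℕ} (f : EuclideanSpace ℝ (Fin p) → ℝ)
    (hC : ContDiff ℝ 2 f) (w δ : EuclideanSpace ℝ (Fin p)) (M : ℝ)
    (hM : ∀ t : ℝ, t ∈ Set.Icc (0 : ℝ) 1 → ‖iteratedFDeriv ℝ 2 f (w + t • δ)‖ ≤ M) :
    |f (w + δ) - f w - ⟪gradient f w, δ⟫| ≤ M * ‖δ‖ ^ 2 / 2 := by
  set γ : ℝ → EuclideanSpace ℝ (Fin p) := fun t => w + t • δ with hγdef
  have hγ : ∀ t : ℝ, HasDerivAt γ δ t := by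
    intro t
    have h1 : HasDerivAt (fun s : ℝ => s • δ) ((1 : ℝ) • δ) t :=
      (hasDerivAt_id t).smul_const δ
    simpa [hγdef] using h1.const_add w
  have hf1 : Differentiable ℝ f := hC.differentiable (by norm_num)
  have hf' : ContDiff ℝ 1 (fderiv ℝ f) := hC.fderiv_right (by norm_num)
  set ψ : ℝ → ℝ := fun t => fderiv ℝ f (γ t) δ with hψdef
  have hφ : ∀ t : ℝ, HasDerivAt (fun s => f (γ s)) (ψ t) t := fun t =>
    ((hf1 (γ t)).hasFDerivAt).comp_hasDerivAt t (hγ t)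
  have hψ : ∀ t : ℝ, HasDerivAt ψ (fderiv ℝ (fderiv ℝ f) (γ t) δ δ) t := by
    intro t
    have h1 : HasDerivAt (fun s => fderiv ℝ f (γ s)) (fderiv ℝ (fderiv ℝ f) (γ t) δ) t :=
      ((hf'.differentiable (by norm_num) (γ t)).hasFDerivAt).comp_hasDerivAt t (hγ t)
    simpa using h1.clm_apply (hasDerivAt_const t δ)
  have hψcont : Continuous ψ := by
    have hγc : Continuous γ := by fun_prop
    exact ((hf'.continuous).comp hγc).clm_apply continuous_const
  have hψint : IntervalIntegrable ψ MeasureTheory.volume 0 1 := hψcont.intervalIntegrable 0 1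
  -- bound on the second derivative along the segment
  have hbound : ∀ t ∈ Set.Icc (0 : ℝ) 1, ‖fderiv ℝ (fderiv ℝ f) (γ t) δ δ‖ ≤ M * ‖δ‖ ^ 2 := by
    intro t ht
    have h2 : fderiv ℝ (fderiv ℝ f) (γ t) δ δ = iteratedFDeriv ℝ 2 f (γ t) ![δ, δ] := by
      rw [iteratedFDeriv_two_apply]
      simp
    rw [h2]
    calc ‖iteratedFDeriv ℝ 2 f (γ t) ![δ, δ]‖
        ≤ ‖iteratedFDeriv ℝ 2 f (γ t)‖ * ∏ i : Fin 2, ‖(![δ, δ]) i‖ :=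
          (iteratedFDeriv ℝ 2 f (γ t)).le_opNorm _
      _ ≤ M * ‖δ‖ ^ 2 := by
          have := hM t ht
          have hn : (∏ i : Fin 2, ‖(![δ, δ]) i‖) = ‖δ‖ ^ 2 := by
            simp [Fin.prod_univ_two]; ring
          rw [hn]
          have h0 : (0:ℝ) ≤ ‖δ‖ ^ 2 := by positivity
          exact mul_le_mul_of_nonneg_right this h0
  -- Lipschitz-type bound on ψ on [0,1]
  have hlip : ∀ t ∈ Set.Icc (0 : ℝ) 1, |ψ t - ψ 0| ≤ (M * ‖δ‖ ^ 2) * t := by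
    intro t ht
    have h := (convex_Icc (0:ℝ) 1).norm_image_sub_le_of_norm_hasDerivWithin_le
      (f := ψ) (f' := fun s => fderiv ℝ (fderiv ℝ f) (γ s) δ δ)
      (fun s hs => (hψ s).hasDerivWithinAt) hbound
      (Set.left_mem_Icc.mpr zero_le_one) ht
    have ht0 : (0:ℝ) ≤ t := ht.1
    simpa [Real.norm_eq_abs, abs_of_nonneg ht0] using h
  -- FTC
  have hFTC : f (w + δ) - f w = ∫ t in (0:ℝ)..1, ψ t := by
    have := intervalIntegral.integral_eq_sub_of_hasDerivAt
      (f := fun s => f (γ s)) (f' := ψ)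
      (fun t _ => hφ t) hψint
    have h0 : γ 0 = w := by simp [hγdef]
    have h1 : γ 1 = w + δ := by simp [hγdef]
    rw [this]; simp only [h0, h1]
  have hψ0 : ψ 0 = ⟪gradient f w, δ⟫ := by
    have h0 : γ 0 = w := by simp [hγdef]
    rw [hψdef]
    simp only [h0]
    rw [gradient]
    exact (InnerProductSpace.toDual_symm_apply).symm
  have key : f (w + δ) - f w - ⟪gradient f w, δ⟫ = ∫ t in (0:ℝ)..1, (ψ t - ψ 0) := by
    rw [intervalIntegral.integral_sub hψint (intervalIntegrable_const)]
    simp [hFTC, hψ0]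
  rw [key]
  have habs : |∫ t in (0:ℝ)..1, (ψ t - ψ 0)| ≤ ∫ t in (0:ℝ)..1, |ψ t - ψ 0| :=
    intervalIntegral.abs_integral_le_integral_abs zero_le_one
  have hint2 : IntervalIntegrable (fun t => |ψ t - ψ 0|) MeasureTheory.volume 0 1 :=
    ((hψcont.sub continuous_const).abs).intervalIntegrable 0 1
  have hint3 : IntervalIntegrable (fun t => (M * ‖δ‖ ^ 2) * t) MeasureTheory.volume 0 1 :=
    (continuous_const.mul continuous_id).intervalIntegrable 0 1
  have hmono : (∫ t in (0:ℝ)..1, |ψ t - ψ 0|) ≤ ∫ t in (0:ℝ)..1, (M * ‖δ‖ ^ 2) * t :=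
    intervalIntegral.integral_mono_on zero_le_one hint2 hint3 hlip
  have hval : (∫ t in (0:ℝ)..1, (M * ‖δ‖ ^ 2) * t) = M * ‖δ‖ ^ 2 / 2 := by
    rw [intervalIntegral.integral_const_mul, integral_id]
    ring
  calc |∫ t in (0:ℝ)..1, (ψ t - ψ 0)| ≤ ∫ t in (0:ℝ)..1, |ψ t - ψ 0| := habs
    _ ≤ ∫ t in (0:ℝ)..1, (M * ‖δ‖ ^ 2) * t := hmono
    _ = M * ‖δ‖ ^ 2 / 2 := hval

/-- Strict improvement of ROSU over the standard perturbation in the positive-alignment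
regime: if `cos θ > M_r ρ / ‖g_r‖`, then `L_r (w + δ_std) > L_r (w + δ_rosu)`. -/
theorem rosu_strict_improvement {p : ℕ}
    (L_r : EuclideanSpace ℝ (Fin p) → ℝ) (M_r ρ : ℝ) (hρ : 0 < ρ)
    (w g_f g_r : EuclideanSpace ℝ (Fin p))
    (hgf : g_f ≠ 0) (hgr : g_r = gradient L_r w) (hgrne : g_r ≠ 0)
    (q : EuclideanSpace ℝ (Fin p))
    (hq : q = g_f - (⟪g_f, g_r⟫ / ‖g_r‖ ^ 2) • g_r) (hqne : q ≠ 0)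
    (δstd δrosu : EuclideanSpace ℝ (Fin p))
    (hstd : δstd = (ρ / ‖g_f‖) • g_f) (hrosu : δrosu = (ρ / ‖q‖) • q)
    (hC : ContDiff ℝ 2 L_r)
    (hM1 : ∀ t : ℝ, t ∈ Set.Icc (0 : ℝ) 1 →
      ‖iteratedFDeriv ℝ 2 L_r (w + t • δstd)‖ ≤ M_r)
    (hM2 : ∀ t : ℝ, t ∈ Set.Icc (0 : ℝ) 1 →
      ‖iteratedFDeriv ℝ 2 L_r (w + t • δrosu)‖ ≤ M_r)
    (halign : ⟪g_f, g_r⟫ / (‖g_f‖ * ‖g_r‖) > M_r * ρ / ‖g_r‖) :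
    L_r (w + δstd) > L_r (w + δrosu) := by
  have hgfn : (0:ℝ) < ‖g_f‖ := norm_pos_iff.mpr hgf
  have hgrn : (0:ℝ) < ‖g_r‖ := norm_pos_iff.mpr hgrne
  have hqn : (0:ℝ) < ‖q‖ := norm_pos_iff.mpr hqne
  have hM0 : 0 ≤ M_r := le_trans (norm_nonneg _) (hM1 0 ⟨le_refl 0, zero_le_one⟩)
  -- norms of the perturbations
  have hnstd : ‖δstd‖ = ρ := by
    rw [hstd, norm_smul, Real.norm_eq_abs, abs_of_pos (div_pos hρ hgfn)]
    field_simp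
  have hnrosu : ‖δrosu‖ = ρ := by
    rw [hrosu, norm_smul, Real.norm_eq_abs, abs_of_pos (div_pos hρ hqn)]
    field_simp
  -- inner product computations
  have hinner_rosu : ⟪gradient L_r w, δrosu⟫ = 0 := by
    rw [← hgr, hrosu, real_inner_smul_right, hq]
    have : ⟪g_r, g_f - (⟪g_f, g_r⟫ / ‖g_r‖ ^ 2) • g_r⟫ = 0 := by
      rw [inner_sub_right, real_inner_smul_right, real_inner_self_eq_norm_sq]
      rw [real_inner_comm g_r g_f]
      field_simp
      ring
    rw [this, mul_zero]
  have hinner_std : ⟪gradient L_r w, δstd⟫ = (ρ / ‖g_f‖) * ⟪g_f, g_r⟫ := by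
    rw [← hgr, hstd, real_inner_smul_right, real_inner_comm]
  -- halign rearranged
  have halign' : M_r * ρ * ‖g_f‖ < ⟪g_f, g_r⟫ := by
    have h1 : M_r * ρ / ‖g_r‖ < ⟪g_f, g_r⟫ / (‖g_f‖ * ‖g_r‖) := halign
    rw [div_lt_div_iff₀ hgrn (mul_pos hgfn hgrn)] at h1
    have h2 : M_r * ρ * (‖g_f‖ * ‖g_r‖) < ⟪g_f, g_r⟫ * ‖g_r‖ := h1
    nlinarith
  have hstd_big : M_r * ρ ^ 2 < ⟪gradient L_r w, δstd⟫ := by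
    rw [hinner_std]
    rw [div_mul_eq_mul_div, lt_div_iff₀ hgfn]
    nlinarith
  -- Taylor bounds
  have hT1 := rosu_taylor_bound L_r hC w δstd M_r hM1
  have hT2 := rosu_taylor_bound L_r hC w δrosu M_r hM2
  rw [hnstd] at hT1
  rw [hnrosu] at hT2
  rw [abs_le] at hT1 hT2
  have h1 := hT1.1
  have h2 := hT2.2
  rw [hinner_rosu] at h2
  rw [hinner_std] at h1 hstd_big
  nlinarith
end
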